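/- arXiv:0904.2638 — 5 statements merged into one kernel-verified Lean document; each statement's English description precedes it below -/
import Mathlib

section
/- Let r1, r2 : E → ℕ be reward functions on a finite edge set E, let |r2| = max over e ∈ E of r2(e), let S be a finite set with |S| = n, and set m = n²·|r2| + 1. Define r* = m·r1 + r2. Then for any two cycles C1, C2 of lengths at most n (each length ≥ 1) with total r1-rewards α1, α2 and total r2-rewards β1, β2, if α1/|C1| > α2/|C2| then (m·α1 + β1)/|C1| > (m·α2 + β2)/|C2|. -/
open Finset

/-- Total reward of a cycle (a nonempty list of edges). -/
def cycleReward {E : Type*} (r : E → ℕ) (C : List E) : ℕ := (C.map r).sum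

lemma cycleReward_le {E : Type*} [Fintype E] (r : E → ℕ) (C : List E) :
    cycleReward r C ≤ C.length * Finset.univ.sup r := by
  induction C with
  | nil => simp [cycleReward]
  | cons a t ih =>
    simp only [cycleReward, List.map_cons, List.sum_cons, List.length_cons] at *
    have : r a ≤ Finset.univ.sup r := Finset.le_sup (Finset.mem_univ a)
    nlinarith

/-- Correctness of the weight-scaling reduction: with `m = n² · |r2| + 1`,
    the combined reward `r* = m·r1 + r2` separates cycles whose `r1`-means differ. -/
theorem scaling_reduction_separates {E : Type*} [Fintype E] [Nonempty E]
    (r1 r2 : E → ℕ) (n : ℕ) (S : Type*) [Fintype S] (hS : Fintype.card S = n)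
    (R : ℕ) (hR : R = Finset.univ.sup r2)
    (m : ℕ) (hm : m = n ^ 2 * R + 1)
    (C1 C2 : List E)
    (h1len : 1 ≤ C1.length) (h1n : C1.length ≤ n)
    (h2len : 1 ≤ C2.length) (h2n : C2.length ≤ n)
    (α1 α2 β1 β2 : ℕ)
    (hα1 : α1 = cycleReward r1 C1) (hα2 : α2 = cycleReward r1 C2)
    (hβ1 : β1 = cycleReward r2 C1) (hβ2 : β2 = cycleReward r2 C2)
    (hgt : (α1 : ℚ) / C1.length > (α2 : ℚ) / C2.length) :
    ((m * α1 + β1 : ℚ)) / C1.length > ((m * α2 + β2 : ℚ)) / C2.length := by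
  have hl1 : (0 : ℚ) < C1.length := by exact_mod_cast h1len
  have hl2 : (0 : ℚ) < C2.length := by exact_mod_cast h2len
  rw [gt_iff_lt, div_lt_div_iff₀ hl2 hl1] at hgt ⊢
  have hgtN : α2 * C1.length < α1 * C2.length := by exact_mod_cast hgt
  have hgtN' : α2 * C1.length + 1 ≤ α1 * C2.length := hgtN
  have hβ2le : β2 ≤ n * R := by
    rw [hβ2, hR]
    exact le_trans (cycleReward_le r2 C2) (Nat.mul_le_mul_right _ h2n)
  have h1 : β2 * C1.length ≤ n * R * n :=
    Nat.mul_le_mul hβ2le h1n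
  have h2 : m * (α2 * C1.length) + m ≤ m * (α1 * C2.length) := by
    calc m * (α2 * C1.length) + m = m * (α2 * C1.length + 1) := by ring
      _ ≤ m * (α1 * C2.length) := Nat.mul_le_mul_left _ hgtN'
  have hmgt : n * R * n < m := by rw [hm]; nlinarith
  have key : (m * α2 + β2) * C1.length < (m * α1 + β1) * C2.length := by
    have e1 : (m * α2 + β2) * C1.length = m * (α2 * C1.length) + β2 * C1.length := by ring
    have e2 : m * (α1 * C2.length) ≤ (m * α1 + β1) * C2.length := by nlinarith
    omega
  push_cast
  exact_mod_cast key
end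

section
/- Let r1, r2 : E → ℕ with |r2| = max r2, |S| = n, m = n²·|r2| + 1, and r* = m·r1 + r2. For any two cycles C1, C2 of lengths at most n, the mean of r* on C1 is at least the mean of r* on C2 if and only if the pair (mean of r1, mean of r2) on C1 is lexicographically at least the pair on C2 — provided the r1-means are equal; and if the r1-means differ, the order of r*-means agrees with the order of r1-means. -/
open Finset

/-- Mean reward of a cycle. -/
noncomputable def cycleMean {E : Type*} (r : E → ℕ) (C : List E) : ℚ :=
  (cycleReward r C : ℚ) / C.length


lemma reward_star {E : Type*} (r1 r2 rstar : E → ℕ) (m : ℕ)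
    (hstar : ∀ e, rstar e = m * r1 e + r2 e) (C : List E) :
    cycleReward rstar C = m * cycleReward r1 C + cycleReward r2 C := by
  unfold cycleReward
  induction C with
  | nil => simp
  | cons a t ih => simp [hstar, ih]; ring

lemma mean_star {E : Type*} (r1 r2 rstar : E → ℕ) (m : ℕ)
    (hstar : ∀ e, rstar e = m * r1 e + r2 e) (C : List E) :
    cycleMean rstar C = m * cycleMean r1 C + cycleMean r2 C := by
  unfold cycleMean
  rw [reward_star r1 r2 rstar m hstar]
  push_cast
  ring

lemma mean_nonneg {E : Type*} (r : E → ℕ) (C : List E) : 0 ≤ cycleMean r C := by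
  unfold cycleMean
  positivity

lemma mean_le {E : Type*} (r : E → ℕ) (R : ℕ) (hR : ∀ e, r e ≤ R)
    (C : List E) (h : 1 ≤ C.length) : cycleMean r C ≤ R := by
  have hlen : (0:ℚ) < C.length := by exact_mod_cast h
  unfold cycleMean
  rw [div_le_iff₀ hlen]
  have : cycleReward r C ≤ C.length * R := by
    unfold cycleReward
    clear h hlen
    induction C with
    | nil => simp
    | cons a t ih =>
      simp only [List.map_cons, List.sum_cons, List.length_cons]
      calc r a + (t.map r).sum ≤ R + t.length * R := add_le_add (hR a) ih
        _ = (t.length + 1) * R := by ring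
  calc (cycleReward r C : ℚ) ≤ (C.length * R : ℕ) := by exact_mod_cast this
    _ = (R:ℚ) * C.length := by push_cast; ring

lemma mean_sep {E : Type*} (r : E → ℕ) (n : ℕ) (C1 C2 : List E)
    (h1len : 1 ≤ C1.length) (h1n : C1.length ≤ n)
    (h2len : 1 ≤ C2.length) (h2n : C2.length ≤ n)
    (h : cycleMean r C1 > cycleMean r C2) :
    cycleMean r C1 - cycleMean r C2 ≥ 1 / (n:ℚ)^2 := by
  have hl1 : (0:ℚ) < C1.length := by exact_mod_cast h1len
  have hl2 : (0:ℚ) < C2.length := by exact_mod_cast h2len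
  have hn : 0 < n := le_trans h1len h1n
  have hnQ : (0:ℚ) < n := by exact_mod_cast hn
  set a := cycleReward r C1
  set b := cycleReward r C2
  have key : ((a : ℤ) * C2.length - (b : ℤ) * C1.length : ℤ) ≥ 1 := by
    by_contra hk
    push_neg at hk
    have hk' : (a : ℤ) * C2.length ≤ (b : ℤ) * C1.length := by omega
    have : cycleMean r C1 ≤ cycleMean r C2 := by
      unfold cycleMean
      rw [div_le_div_iff₀ hl1 hl2]
      exact_mod_cast hk'
    linarith
  have key' : (1:ℚ) ≤ (a:ℚ) * C2.length - (b:ℚ) * C1.length := by exact_mod_cast key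
  have expand : cycleMean r C1 - cycleMean r C2
      = ((a:ℚ) * C2.length - (b:ℚ) * C1.length) / (C1.length * C2.length) := by
    unfold cycleMean
    field_simp
    ring
  rw [expand, ge_iff_le, div_le_div_iff₀ (by positivity) (by positivity)]
  have hn1 : (C1.length : ℚ) ≤ n := by exact_mod_cast h1n
  have hn2 : (C2.length : ℚ) ≤ n := by exact_mod_cast h2n
  nlinarith [mul_le_mul hn1 hn2 (le_of_lt hl2) (le_of_lt hnQ)]


/-- Full correctness of the reduction from two-dimensional lexicographic
    mean-payoff comparison of cycles to one-dimensional mean-payoff comparison: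
    if the `r1`-means are equal, the `r*`-means compare exactly as the
    lexicographic pairs of means; if the `r1`-means differ, the order of the
    `r*`-means agrees with the order of the `r1`-means. -/
theorem scaling_reduction_correct {E : Type*} [Fintype E] [Nonempty E]
    (r1 r2 : E → ℕ) (n : ℕ) (S : Type*) [Fintype S] (hS : Fintype.card S = n)
    (R : ℕ) (hR : R = Finset.univ.sup r2)
    (m : ℕ) (hm : m = n ^ 2 * R + 1)
    (rstar : E → ℕ) (hstar : ∀ e, rstar e = m * r1 e + r2 e)
    (C1 C2 : List E)
    (h1len : 1 ≤ C1.length) (h1n : C1.length ≤ n)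
    (h2len : 1 ≤ C2.length) (h2n : C2.length ≤ n) :
    (cycleMean r1 C1 = cycleMean r1 C2 →
      (cycleMean rstar C1 ≥ cycleMean rstar C2 ↔
        (cycleMean r1 C1 > cycleMean r1 C2 ∨
          (cycleMean r1 C1 = cycleMean r1 C2 ∧ cycleMean r2 C1 ≥ cycleMean r2 C2)))) ∧
    (cycleMean r1 C1 ≠ cycleMean r1 C2 →
      (cycleMean rstar C1 > cycleMean rstar C2 ↔ cycleMean r1 C1 > cycleMean r1 C2)) := by
  have hr2 : ∀ e, r2 e ≤ R := by
    intro e; rw [hR]; exact Finset.le_sup (Finset.mem_univ e)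
  have hmQ : (m:ℚ) = (n:ℚ)^2 * R + 1 := by rw [hm]; push_cast; ring
  have hRnn : (0:ℚ) ≤ R := by positivity
  have strict : ∀ D1 D2 : List E, 1 ≤ D1.length → D1.length ≤ n →
      1 ≤ D2.length → D2.length ≤ n →
      cycleMean r1 D1 > cycleMean r1 D2 → cycleMean rstar D1 > cycleMean rstar D2 := by
    intro D1 D2 a b c d h
    have hsep := mean_sep r1 n D1 D2 a b c d h
    have hn : 0 < n := le_trans a b
    have hn2 : (0:ℚ) < (n:ℚ)^2 := by positivity
    have h' : (1:ℚ) ≤ (cycleMean r1 D1 - cycleMean r1 D2) * (n:ℚ)^2 := by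
      rw [ge_iff_le, div_le_iff₀ hn2] at hsep
      exact hsep
    have b1 := mean_le r2 R hr2 D2 c
    have nn := mean_nonneg r2 D1
    rw [mean_star r1 r2 rstar m hstar D1, mean_star r1 r2 rstar m hstar D2, hmQ]
    nlinarith [mul_le_mul_of_nonneg_left h' hRnn]
  refine ⟨fun heq => ?_, fun hne => ?_⟩
  · have e1 := mean_star r1 r2 rstar m hstar C1
    have e2 := mean_star r1 r2 rstar m hstar C2
    constructor
    · intro hge
      rw [ge_iff_le, e1, e2, heq] at hge
      exact Or.inr ⟨heq, by linarith⟩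
    · rintro (hgt | ⟨-, hge⟩)
      · exact absurd heq (ne_of_gt hgt)
      · rw [ge_iff_le, e1, e2, heq]
        linarith
  · constructor
    · intro hst
      by_contra hnot
      have hlt : cycleMean r1 C1 < cycleMean r1 C2 := lt_of_le_of_ne (not_lt.1 hnot) hne
      have := strict C2 C1 h2len h2n h1len h1n hlt
      linarith
    · exact strict C1 C2 h1len h1n h2len h2n
end

section
/- There is no eventually-periodic (lasso) sequence of rewards aₙ ∈ {0,1} that (i) contains infinitely many 0s and (ii) has liminf_{n→∞} (1/n)·Σ_{i<n} aᵢ = 1; but for every ε > 0 there is a periodic sequence with infinitely many 0s whose mean payoff is at least 1 − ε (namely, a 0 every k steps for k > 1/ε). Moreover there exists a (non-eventually-periodic) sequence with infinitely many 0s and mean payoff exactly 1. -/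
open Filter Finset

/-- Mean payoff of a reward sequence: liminf of the prefix averages. -/
noncomputable def meanPayoff (a : ℕ → ℝ) : ℝ :=
  Filter.liminf (fun n : ℕ => (∑ i ∈ Finset.range n, a i) / n) atTop

lemma part1 : ¬ ∃ a : ℕ → ℝ, (∀ n, a n = 0 ∨ a n = 1) ∧
    (∃ N p : ℕ, 1 ≤ p ∧ ∀ n, N ≤ n → a (n + p) = a n) ∧
    (∀ N, ∃ n, N ≤ n ∧ a n = 0) ∧
    meanPayoff a = 1 := by
  rintro ⟨a, hval, ⟨N, p, hp, hper⟩, hinf, hmean⟩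
  have ha0 : ∀ n, 0 ≤ a n := fun n => by rcases hval n with h|h <;> simp [h]
  have ha1 : ∀ n, a n ≤ 1 := fun n => by rcases hval n with h|h <;> simp [h]
  obtain ⟨n₀, hn₀N, hn₀⟩ := hinf N
  -- zeros at n₀ + j*p
  have hz : ∀ j, a (n₀ + j * p) = 0 := by
    intro j
    induction j with
    | zero => simpa using hn₀
    | succ j ih =>
      have : n₀ + (j + 1) * p = (n₀ + j * p) + p := by ring
      rw [this, hper _ (le_trans hn₀N (Nat.le_add_right _ _))]
      exact ih
  set D : ℝ := (n₀ : ℝ) + p + 1 with hD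
  have hDpos : 0 < D := by positivity
  -- key bound on averages at times n₀ + k*p + 1
  have key : ∀ k : ℕ, (∑ i ∈ range (n₀ + k * p + 1), a i) / (n₀ + k * p + 1 : ℕ) ≤ 1 - 1 / D := by
    intro k
    set n : ℕ := n₀ + k * p + 1 with hn
    have hinj : Function.Injective (fun j : ℕ => n₀ + j * p) := by
      intro i j hij
      simp only at hij
      exact Nat.eq_of_mul_eq_mul_right hp (by omega)
    set S : Finset ℕ := (range (k + 1)).image (fun j => n₀ + j * p) with hS
    have hsub : S ⊆ range n := by
      intro x hx
      simp only [hS, mem_image, mem_range] at hx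
      obtain ⟨j, hj, rfl⟩ := hx
      simp only [mem_range, hn]
      have : j * p ≤ k * p := Nat.mul_le_mul_right p (by omega)
      omega
    have hcard : S.card = k + 1 := by
      rw [hS, Finset.card_image_of_injective _ hinj, Finset.card_range]
    have hsum0 : ∑ i ∈ S, a i = 0 := by
      apply Finset.sum_eq_zero
      intro x hx
      simp only [hS, mem_image, mem_range] at hx
      obtain ⟨j, _, rfl⟩ := hx
      exact hz j
    have hsumle : (∑ i ∈ range n, a i) ≤ (n : ℝ) - (k + 1) := by
      have := Finset.sum_sdiff hsub (f := a)
      rw [hsum0, add_zero] at this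
      rw [← this]
      calc (∑ i ∈ range n \ S, a i) ≤ ∑ _i ∈ range n \ S, (1:ℝ) :=
            Finset.sum_le_sum fun i _ => ha1 i
        _ = ((range n \ S).card : ℝ) := by simp
        _ = (n : ℝ) - (k + 1) := by
            rw [Finset.card_sdiff_of_subset hsub, hcard, Finset.card_range]
            have hkp : k ≤ k * p := Nat.le_mul_of_pos_right k hp
            have hle : k + 1 ≤ n := by omega
            push_cast [Nat.cast_sub hle]
            ring
    have hnpos : (0:ℝ) < (n:ℕ) := by positivity
    rw [div_le_iff₀ hnpos]
    have hcast : ((n:ℕ):ℝ) = (n₀:ℝ) + k * p + 1 := by rw [hn]; push_cast; ring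
    have hp1 : (1:ℝ) ≤ (p:ℝ) := by exact_mod_cast hp
    calc (∑ i ∈ range n, a i) ≤ (n : ℝ) - (k + 1) := hsumle
      _ ≤ (1 - 1 / D) * n := by
          rw [hcast, hD]
          rw [sub_mul, one_mul, sub_le_sub_iff_left, div_mul_eq_mul_div,
            div_le_iff₀ hDpos]
          nlinarith [(Nat.cast_nonneg n₀ : (0:ℝ) ≤ (n₀:ℝ)), (Nat.cast_nonneg k : (0:ℝ) ≤ (k:ℝ)), hp1]
  -- liminf ≤ 1 - 1/D
  have hbdd : IsBoundedUnder (· ≥ ·) atTop (fun n : ℕ => (∑ i ∈ range n, a i) / n) :=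
    by
    refine isBoundedUnder_of ⟨(0:ℝ), fun n => ?_⟩
    exact div_nonneg (Finset.sum_nonneg fun i _ => ha0 i) (Nat.cast_nonneg n)
  have hfreq : ∃ᶠ n in atTop, (∑ i ∈ range n, a i) / (n:ℕ) ≤ 1 - 1 / D := by
    rw [frequently_atTop]
    intro b
    refine ⟨n₀ + b * p + 1, ?_, key b⟩
    have : b ≤ b * p := Nat.le_mul_of_pos_right b hp
    omega
  have hle : meanPayoff a ≤ 1 - 1 / D := liminf_le_of_frequently_le hfreq hbdd
  rw [hmean] at hle
  have : 0 < 1 / D := by positivity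
  linarith

lemma part2 (ε : ℝ) (hε : 0 < ε) : ∃ a : ℕ → ℝ, (∀ n, a n = 0 ∨ a n = 1) ∧
    (∃ p : ℕ, 1 ≤ p ∧ ∀ n, a (n + p) = a n) ∧
    (∀ N, ∃ n, N ≤ n ∧ a n = 0) ∧
    1 - ε ≤ meanPayoff a := by
  set p : ℕ := ⌈ε⁻¹⌉₊ + 1 with hp
  have hp1 : 1 ≤ p := Nat.le_add_left 1 _
  have hpR : (0:ℝ) < p := by exact_mod_cast hp1
  have hpe : 1 / (p:ℝ) ≤ ε := by
    rw [div_le_iff₀ hpR]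
    have h1 : ε⁻¹ ≤ (⌈ε⁻¹⌉₊ : ℝ) := Nat.le_ceil _
    have h2 : (⌈ε⁻¹⌉₊ : ℝ) ≤ (p:ℝ) - 1 := by rw [hp]; push_cast; linarith
    have : ε⁻¹ * ε = 1 := inv_mul_cancel₀ (ne_of_gt hε)
    nlinarith
  refine ⟨fun n => if p ∣ (n + 1) then 0 else 1, fun n => ?_, ⟨p, hp1, fun n => ?_⟩, fun N => ?_, ?_⟩
  · dsimp only; split <;> simp
  · have : p ∣ (n + p + 1) ↔ p ∣ (n + 1) := by
      constructor <;> intro h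
      · have := Nat.dvd_sub h (Dvd.intro 1 (by ring) : p ∣ p)
        simpa [Nat.add_sub_cancel, show n + p + 1 - p = n + 1 by omega] using this
      · exact (by omega : n + p + 1 = (n + 1) + p) ▸ Nat.dvd_add h dvd_rfl
    simp [this]
  · refine ⟨p * (N + 1) - 1, by have := Nat.le_mul_of_pos_right (N + 1) hp1; rw [Nat.mul_comm] at this; omega, ?_⟩
    have : p * (N + 1) - 1 + 1 = p * (N + 1) := by
      have : 1 ≤ p * (N + 1) := Nat.one_le_iff_ne_zero.mpr (by positivity)
      omega
    simp [this, Dvd.intro (N + 1) rfl]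
  · -- mean payoff bound
    have hsum : ∀ n : ℕ, (∑ i ∈ range n, (if p ∣ (i + 1) then (0:ℝ) else 1)) = (n:ℝ) - (n / p : ℕ) := by
      intro n
      have : ∀ i, (if p ∣ (i + 1) then (0:ℝ) else 1) = 1 - (if p ∣ (i + 1) then (1:ℝ) else 0) := by
        intro i; split <;> ring
      simp_rw [this]
      rw [Finset.sum_sub_distrib, Finset.sum_boole]
      have := Nat.card_multiples n p
      rw [show ({e ∈ range n | p ∣ e + 1} : Finset ℕ) = (range n).filter (fun e => p ∣ e + 1) from rfl] at this
      rw [this]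
      simp
    have hev : ∀ᶠ n : ℕ in atTop, 1 - ε ≤ (∑ i ∈ range n, (if p ∣ (i + 1) then (0:ℝ) else 1)) / n := by
      filter_upwards [eventually_ge_atTop 1] with n hn
      have hnR : (0:ℝ) < n := by exact_mod_cast hn
      rw [hsum, le_div_iff₀ hnR]
      have hfloor : ((n / p : ℕ) : ℝ) ≤ (n:ℝ) / p := Nat.cast_div_le
      have h1 : (n:ℝ) / p ≤ ε * n := by
        rw [div_le_iff₀ hpR]
        have hep : 1 ≤ ε * p := by rwa [div_le_iff₀ hpR] at hpe
        nlinarith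
      nlinarith
    have hcob : IsCoboundedUnder (· ≥ ·) atTop (fun n : ℕ => (∑ i ∈ range n, (if p ∣ (i + 1) then (0:ℝ) else 1)) / n) := by
      apply IsBoundedUnder.isCoboundedUnder_ge
      refine isBoundedUnder_of ⟨(1:ℝ), fun n => ?_⟩
      rcases Nat.eq_zero_or_pos n with rfl | hn
      · simp
      · rw [div_le_one (by exact_mod_cast hn)]
        calc (∑ i ∈ range n, (if p ∣ (i + 1) then (0:ℝ) else 1)) ≤ ∑ _i ∈ range n, (1:ℝ) :=
              Finset.sum_le_sum fun i _ => by split <;> norm_num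
          _ = n := by simp
    exact le_liminf_of_le hcob hev

lemma sqrt_aux : Tendsto (fun n : ℕ => 1 - (Real.sqrt n + 1) / n) atTop (nhds 1) := by
  have h1 : Tendsto (fun n : ℕ => Real.sqrt n) atTop atTop := by
    apply tendsto_atTop_atTop_of_monotone
    · intro m n hmn
      exact Real.sqrt_le_sqrt (by exact_mod_cast hmn)
    · intro b
      refine ⟨⌈b⌉₊ ^ 2, ?_⟩
      have : ((⌈b⌉₊ ^ 2 : ℕ) : ℝ) = (⌈b⌉₊ : ℝ) ^ 2 := by push_cast; ring
      rw [this, Real.sqrt_sq (by positivity)]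
      exact Nat.le_ceil b
  have h2 : Tendsto (fun n : ℕ => 2 * (Real.sqrt n)⁻¹) atTop (nhds 0) := by
    have := h1.inv_tendsto_atTop
    simpa using this.const_mul (2:ℝ)
  have h3 : Tendsto (fun n : ℕ => (Real.sqrt n + 1) / n) atTop (nhds 0) := by
    apply tendsto_of_tendsto_of_tendsto_of_le_of_le' tendsto_const_nhds h2
    · filter_upwards [eventually_ge_atTop 1] with n hn
      positivity
    · filter_upwards [eventually_ge_atTop 1] with n hn
      have hn1 : (1:ℝ) ≤ (n:ℝ) := by exact_mod_cast hn
      have hs1 : (1:ℝ) ≤ Real.sqrt n := by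
        rw [show (1:ℝ) = Real.sqrt 1 by simp]
        exact Real.sqrt_le_sqrt hn1
      have hss : Real.sqrt n * Real.sqrt n = (n:ℝ) := Real.mul_self_sqrt (by positivity)
      rw [div_le_iff₀ (by linarith)]
      have : (2:ℝ) * (Real.sqrt n)⁻¹ * n = 2 * Real.sqrt n := by
        field_simp
        nlinarith
      rw [this]
      nlinarith
  have h4 : Tendsto (fun n : ℕ => (1:ℝ) - (Real.sqrt n + 1) / n) atTop (nhds (1 - 0)) :=
    Tendsto.sub tendsto_const_nhds h3
  simpa using h4

lemma part3 : ∃ a : ℕ → ℝ, (∀ n, a n = 0 ∨ a n = 1) ∧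
    (∀ N, ∃ n, N ≤ n ∧ a n = 0) ∧
    meanPayoff a = 1 := by
  set a : ℕ → ℝ := fun n => if Nat.sqrt n * Nat.sqrt n = n then 0 else 1 with ha
  have hval : ∀ n, a n = 0 ∨ a n = 1 := fun n => by rw [ha]; dsimp only; split <;> simp
  have ha1 : ∀ n, a n ≤ 1 := fun n => by rcases hval n with h|h <;> simp [h]
  have ha0 : ∀ n, 0 ≤ a n := fun n => by rcases hval n with h|h <;> simp [h]
  refine ⟨a, hval, fun N => ⟨N * N, ?_, ?_⟩, ?_⟩
  · nlinarith
  · rw [ha]; simp [Nat.sqrt_eq]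
  · -- meanPayoff a = 1
    set Z : ℕ → ℕ := fun n => ((range n).filter (fun i => Nat.sqrt i * Nat.sqrt i = i)).card with hZdef
    have hsum : ∀ n : ℕ, (∑ i ∈ range n, a i) = (n:ℝ) - Z n := by
      intro n
      have : ∀ i, a i = 1 - (if Nat.sqrt i * Nat.sqrt i = i then (1:ℝ) else 0) := by
        intro i; rw [ha]; dsimp only; split <;> ring
      simp_rw [this]
      rw [Finset.sum_sub_distrib, Finset.sum_boole]
      simp [hZdef]
    have hZle : ∀ n, Z n ≤ Nat.sqrt n + 1 := by
      intro n
      have : Z n ≤ (range (Nat.sqrt n + 1)).card := by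
        apply Finset.card_le_card_of_injOn Nat.sqrt
        · intro i hi
          rw [Finset.mem_coe] at hi ⊢
          simp only [mem_filter, mem_range] at hi ⊢
          have : Nat.sqrt i ≤ Nat.sqrt n := Nat.sqrt_le_sqrt (le_of_lt hi.1)
          omega
        · intro i hi j hj hij
          simp only [coe_filter, Set.mem_setOf_eq, mem_range] at hi hj
          rw [← hi.2, ← hj.2, hij]
      simpa using this
    have hev : ∀ᶠ n : ℕ in atTop, 1 - (Real.sqrt n + 1) / n ≤ (∑ i ∈ range n, a i) / n := by
      filter_upwards [eventually_ge_atTop 1] with n hn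
      have hnR : (0:ℝ) < n := by exact_mod_cast hn
      rw [hsum, sub_div, div_self (ne_of_gt hnR)]
      gcongr
      have h1 : ((Z n : ℕ) : ℝ) ≤ ((Nat.sqrt n : ℕ) : ℝ) + 1 := by exact_mod_cast hZle n
      have h2 : ((Nat.sqrt n : ℕ) : ℝ) ≤ Real.sqrt n := Real.nat_sqrt_le_real_sqrt
      linarith
    have hbdd : IsBoundedUnder (· ≥ ·) atTop (fun n : ℕ => (∑ i ∈ range n, a i) / n) := by
      refine isBoundedUnder_of ⟨(0:ℝ), fun n => ?_⟩
      exact div_nonneg (Finset.sum_nonneg fun i _ => ha0 i) (Nat.cast_nonneg n)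
    have hbddabove : IsBoundedUnder (· ≤ ·) atTop (fun n : ℕ => (∑ i ∈ range n, a i) / n) := by
      refine isBoundedUnder_of ⟨(1:ℝ), fun n => ?_⟩
      rcases Nat.eq_zero_or_pos n with rfl | hn
      · simp
      · rw [div_le_one (by exact_mod_cast hn)]
        calc (∑ i ∈ range n, a i) ≤ ∑ _i ∈ range n, (1:ℝ) :=
              Finset.sum_le_sum fun i _ => ha1 i
          _ = n := by simp
    have hup : meanPayoff a ≤ 1 := by
      apply liminf_le_of_frequently_le _ hbdd
      apply Eventually.frequently
      filter_upwards with n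
      rcases Nat.eq_zero_or_pos n with rfl | hn
      · simp
      · rw [div_le_one (by exact_mod_cast hn)]
        calc (∑ i ∈ range n, a i) ≤ ∑ _i ∈ range n, (1:ℝ) :=
              Finset.sum_le_sum fun i _ => ha1 i
          _ = n := by simp
    have hlow : 1 ≤ meanPayoff a := by
      have hliminf1 : liminf (fun n : ℕ => 1 - (Real.sqrt n + 1) / n) atTop = 1 :=
        sqrt_aux.liminf_eq
      rw [← hliminf1]
      exact liminf_le_liminf hev sqrt_aux.isBoundedUnder_ge
        (hbddabove.isCoboundedUnder_ge)
    exact le_antisymm hup hlow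

/-- Example 3: no lasso (eventually periodic) `{0,1}`-valued reward sequence with
    infinitely many `0`s has mean payoff `1`; but for every `ε > 0` a periodic
    such sequence attains mean payoff at least `1 − ε`; and some
    (infinite-memory) sequence with infinitely many `0`s has mean payoff
    exactly `1`. -/
theorem lasso_limit_realizability :
    (¬ ∃ a : ℕ → ℝ, (∀ n, a n = 0 ∨ a n = 1) ∧
        (∃ N p : ℕ, 1 ≤ p ∧ ∀ n, N ≤ n → a (n + p) = a n) ∧
        (∀ N, ∃ n, N ≤ n ∧ a n = 0) ∧
        meanPayoff a = 1) ∧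
    (∀ ε : ℝ, 0 < ε → ∃ a : ℕ → ℝ, (∀ n, a n = 0 ∨ a n = 1) ∧
        (∃ p : ℕ, 1 ≤ p ∧ ∀ n, a (n + p) = a n) ∧
        (∀ N, ∃ n, N ≤ n ∧ a n = 0) ∧
        1 - ε ≤ meanPayoff a) ∧
    (∃ a : ℕ → ℝ, (∀ n, a n = 0 ∨ a n = 1) ∧
        (∀ N, ∃ n, N ≤ n ∧ a n = 0) ∧
        meanPayoff a = 1) := by
  exact ⟨part1, part2, part3⟩
end

section
/- Suppose every simple cycle C in a finite directed graph (all vertices having out-degree ≥ 1, edge rewards r : E → ℝ bounded by R ≥ 0, rewards nonnegative) satisfies (sum of r over C)/|C| ≥ ℓ with ℓ ≥ 0. Then every infinite path ρ = e₀e₁… in the graph satisfies liminf_{n→∞} (1/n)·Σ_{i<n} r(eᵢ) ≥ ℓ. -/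
open Filter Finset

/-- A simple cycle: a closed walk of length `≥ 1` (written as a vertex list of
    length `≥ 2` with equal first and last vertex), following edges of the
    graph, with no repeated vertex except the endpoint. -/
def IsSimpleCycle {V : Type*} (Adj : V → V → Prop) (c : List V) : Prop :=
  2 ≤ c.length ∧ c.head? = c.getLast? ∧ c.Chain' Adj ∧ c.dropLast.Nodup

/-- Sum of the rewards along a vertex list. -/
def listRewardSum {V : Type*} (r : V → V → ℝ) (c : List V) : ℝ :=
  ((c.zip c.tail).map fun p => r p.1 p.2).sum

lemma listRewardSum_cons_cons {V : Type*} (r : V → V → ℝ) (a b : V) (t : List V) :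
    listRewardSum r (a :: b :: t) = r a b + listRewardSum r (b :: t) := by
  simp [listRewardSum]

lemma map_range_succ_eq {V : Type*} (f : ℕ → V) (k : ℕ) :
    (List.range (k+1)).map f = f 0 :: (List.range k).map (fun i => f (i+1)) := by
  rw [List.range_succ_eq_map, List.map_cons, List.map_map]
  rfl

lemma listRewardSum_map_range {V : Type*} (r : V → V → ℝ) :
    ∀ (k : ℕ) (f : ℕ → V), listRewardSum r ((List.range (k+1)).map f)
      = ∑ i ∈ Finset.range k, r (f i) (f (i+1)) := by
  intro k
  induction k with
  | zero => intro f; simp [listRewardSum, List.range_succ]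
  | succ k ih =>
    intro f
    rw [map_range_succ_eq, map_range_succ_eq, listRewardSum_cons_cons,
      ← map_range_succ_eq (fun i => f (i+1)) k, ih (fun i => f (i+1)),
      Finset.sum_range_succ' (fun i => r (f i) (f (i+1)))]
    ring

lemma key_lemma {V : Type*} [Fintype V] (Adj : V → V → Prop) (r : V → V → ℝ) (ℓ : ℝ)
    (hr0 : ∀ u v, 0 ≤ r u v) (hℓ : 0 ≤ ℓ)
    (hcyc : ∀ c : List V, IsSimpleCycle Adj c →
      ℓ ≤ listRewardSum r c / ((c.length : ℝ) - 1)) :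
    ∀ (n : ℕ) (ρ : ℕ → V), (∀ i, Adj (ρ i) (ρ (i+1))) →
      ℓ * ((n : ℝ) - Fintype.card V) ≤ ∑ i ∈ Finset.range n, r (ρ i) (ρ (i+1)) := by
  intro n
  induction n using Nat.strong_induction_on with
  | _ n IH =>
    intro ρ hρ
    classical
    by_cases h : ∃ d, 0 < d ∧ ∃ a, a + d ≤ n ∧ ρ a = ρ (a + d)
    · -- there is a repetition: remove a minimal cycle
      set d := Nat.find h with hdef
      obtain ⟨hd, a, han, heq⟩ := Nat.find_spec h
      set f : ℕ → V := fun i => ρ (a + i) with hf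
      -- the minimal cycle is simple
      have hmin : ∀ d', d' < d → ¬ (0 < d' ∧ ∃ a', a' + d' ≤ n ∧ ρ a' = ρ (a' + d')) :=
        fun d' hd' => Nat.find_min h hd'
      have hnodup : ((List.range d).map f).Nodup := by
        refine List.Nodup.map_on ?_ (List.nodup_range (n := d))
        intro x hx y hy hxy
        simp only [List.mem_range] at hx hy
        by_contra hne
        rcases Nat.lt_or_ge x y with hlt | hge
        · exact hmin (y - x) (by omega) ⟨by omega, a + x, by omega, by
            simpa [hf, show a + x + (y - x) = a + y by omega] using hxy⟩
        · have hlt : y < x := by omega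
          exact hmin (x - y) (by omega) ⟨by omega, a + y, by omega, by
            simpa [hf, show a + y + (x - y) = a + x by omega] using hxy.symm⟩
      have hcycle : IsSimpleCycle Adj ((List.range (d+1)).map f) := by
        refine ⟨by simp; omega, ?_, ?_, ?_⟩
        · have hh : ((List.range (d+1)).map f).head? = some (f 0) := by
            rw [List.range_succ_eq_map]; rfl
          have hl : ((List.range (d+1)).map f).getLast? = some (f d) := by
            rw [List.range_succ, List.map_append]
            exact List.getLast?_concat
          rw [hh, hl]
          simpa [hf] using heq
        · show List.IsChain Adj _
          rw [List.isChain_map]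
          rw [show d + 1 = d.succ from rfl, List.isChain_range_succ]
          intro m hm
          simpa [hf, show a + m + 1 = a + (m+1) by omega] using hρ (a + m)
        · rw [List.range_succ, List.map_append]
          simpa [List.dropLast_concat] using hnodup
      have hsum : listRewardSum r ((List.range (d+1)).map f)
          = ∑ i ∈ Finset.range d, r (f i) (f (i+1)) := listRewardSum_map_range r d f
      have hlen : (((List.range (d+1)).map f).length : ℝ) - 1 = (d : ℝ) := by
        simp
      have hcbound : ℓ * d ≤ ∑ i ∈ Finset.range d, r (f i) (f (i+1)) := by
        have := hcyc _ hcycle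
        rw [hlen, hsum, le_div_iff₀ (by exact_mod_cast hd)] at this
        linarith
      -- shortened path
      set σ : ℕ → V := fun i => if i < a then ρ i else ρ (i + d) with hσ
      have hσadj : ∀ i, Adj (σ i) (σ (i+1)) := by
        intro i
        by_cases h1 : i + 1 < a
        · simpa [hσ, h1, show i < a by omega] using hρ i
        · by_cases h2 : i < a
          · have ha : i + 1 = a := by omega
            have : σ (i+1) = ρ (i+1) := by
              simp [hσ, h1, ha, ← heq]; exact heq.symm
            rw [this]
            simpa [hσ, h2] using hρ i
          · simpa [hσ, h1, h2, show i + 1 + d = i + d + 1 by omega] using hρ (i + d)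
      have hIH := IH (n - d) (by omega) σ hσadj
      -- sum identity
      set m := n - (a + d) with hm
      have hn : n = a + (d + m) := by omega
      have hnd : n - d = a + m := by omega
      have hsplit : ∑ i ∈ Finset.range n, r (ρ i) (ρ (i+1))
          = (∑ i ∈ Finset.range (n - d), r (σ i) (σ (i+1)))
            + ∑ i ∈ Finset.range d, r (f i) (f (i+1)) := by
        rw [hnd, hn, Finset.sum_range_add, Finset.sum_range_add, Finset.sum_range_add]
        have e1 : ∀ i ∈ Finset.range a, r (ρ i) (ρ (i+1)) = r (σ i) (σ (i+1)) := by
          intro i hi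
          simp only [Finset.mem_range] at hi
          by_cases h1 : i + 1 < a
          · simp [hσ, hi, h1]
          · have ha : i + 1 = a := by omega
            have h2 : σ (i+1) = ρ (i+1) := by simp [hσ, h1, ha, ← heq]; exact heq.symm
            have h3 : σ i = ρ i := by simp [hσ, hi]
            rw [h2, h3]
        have e2 : ∀ i ∈ Finset.range m,
            r (ρ (a + (d + i))) (ρ (a + (d + i) + 1)) = r (σ (a + i)) (σ (a + i + 1)) := by
          intro i hi
          simp [hσ, show ¬ a + i < a by omega, show ¬ a + i + 1 < a by omega,
            show a + i + d = a + (d + i) by omega, show a + i + 1 + d = a + (d + i) + 1 by omega]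
        rw [Finset.sum_congr rfl e1, Finset.sum_congr rfl e2]
        have e3 : ∀ i ∈ Finset.range d, r (ρ (a + i)) (ρ (a + i + 1)) = r (f i) (f (i+1)) := by
          intro i _
          simp [hf, show a + i + 1 = a + (i + 1) by omega]
        rw [Finset.sum_congr rfl e3]
        ring
      rw [hsplit]
      have hcast : ((n - d : ℕ) : ℝ) = (n : ℝ) - (d : ℝ) :=
        Nat.cast_sub (by omega)
      rw [hcast] at hIH
      nlinarith [hIH, hcbound]
    · -- no repetition: the path is injective, so short
      push_neg at h
      have hinj : Function.Injective (fun i : Fin (n+1) => ρ i) := by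
        intro i j hij
        simp only at hij
        by_contra hne
        rcases Nat.lt_or_ge (i : ℕ) (j : ℕ) with hlt | hge
        · have := h ((j : ℕ) - i) (by omega)
          exact this i (by omega) (by simpa [show (i : ℕ) + ((j:ℕ) - i) = j by omega] using hij)
        · have hlt : (j : ℕ) < i := by
            have : (i : ℕ) ≠ j := fun hc => hne (Fin.ext hc)
            omega
          have := h ((i : ℕ) - j) (by omega)
          exact this j (by omega) (by simpa [show (j : ℕ) + ((i:ℕ) - j) = i by omega] using hij.symm)
      have hcard : n + 1 ≤ Fintype.card V := by
        simpa using Fintype.card_le_of_injective _ hinj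
      have h1 : (n : ℝ) - Fintype.card V ≤ -1 := by
        have : (n : ℝ) + 1 ≤ Fintype.card V := by exact_mod_cast hcard
        linarith
      have h2 : 0 ≤ ∑ i ∈ Finset.range n, r (ρ i) (ρ (i+1)) :=
        Finset.sum_nonneg fun i _ => hr0 _ _
      nlinarith

/-- Cycle-to-play transfer: if every simple cycle of the graph has mean
    reward at least `ℓ`, then every infinite path has mean payoff (liminf of
    prefix averages) at least `ℓ`. -/
theorem cycle_bound_transfers_to_plays {V : Type*} [Fintype V]
    (Adj : V → V → Prop) (htotal : ∀ v, ∃ w, Adj v w)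
    (r : V → V → ℝ) (R : ℝ) (hR : 0 ≤ R)
    (hr : ∀ u v, 0 ≤ r u v ∧ r u v ≤ R)
    (ℓ : ℝ) (hℓ : 0 ≤ ℓ)
    (hcyc : ∀ c : List V, IsSimpleCycle Adj c →
      ℓ ≤ listRewardSum r c / ((c.length : ℝ) - 1))
    (ρ : ℕ → V) (hρ : ∀ n, Adj (ρ n) (ρ (n + 1))) :
    ℓ ≤ Filter.liminf
      (fun n : ℕ => (∑ i ∈ Finset.range n, r (ρ i) (ρ (i + 1))) / n) atTop := by
  set f : ℕ → ℝ := fun n => (∑ i ∈ Finset.range n, r (ρ i) (ρ (i + 1))) / n with hfd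
  set g : ℕ → ℝ := fun n => ℓ - ℓ * (Fintype.card V) / n with hgd
  have hkey := key_lemma Adj r ℓ (fun u v => (hr u v).1) hℓ hcyc
  have hg_tendsto : Tendsto g atTop (nhds ℓ) := by
    have := tendsto_const_div_atTop_nhds_zero_nat (ℓ * (Fintype.card V))
    have h2 : Tendsto (fun n : ℕ => ℓ - ℓ * (Fintype.card V) / n) atTop (nhds (ℓ - 0)) :=
      tendsto_const_nhds.sub this
    simpa using h2
  have hle : ∀ᶠ n : ℕ in atTop, g n ≤ f n := by
    filter_upwards [eventually_gt_atTop 0] with n hn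
    have hbd := hkey n ρ hρ
    have hnpos : (0 : ℝ) < n := by exact_mod_cast hn
    show ℓ - ℓ * (Fintype.card V) / n ≤ (∑ i ∈ Finset.range n, r (ρ i) (ρ (i + 1))) / n
    rw [← sub_nonneg]
    have heq2 : (∑ i ∈ Finset.range n, r (ρ i) (ρ (i + 1))) / n
        - (ℓ - ℓ * (Fintype.card V) / n)
        = ((∑ i ∈ Finset.range n, r (ρ i) (ρ (i + 1))) - ℓ * ((n : ℝ) - Fintype.card V)) / n := by
      field_simp
    rw [heq2]
    exact div_nonneg (by linarith) hnpos.le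
  have hfub : ∀ n, f n ≤ R := by
    intro n
    rcases Nat.eq_zero_or_pos n with h0 | hpos
    · simp [hfd, h0, hR]
    · have hnpos : (0 : ℝ) < n := by exact_mod_cast hpos
      rw [hfd, div_le_iff₀ hnpos]
      calc (∑ i ∈ Finset.range n, r (ρ i) (ρ (i + 1)))
          ≤ ∑ _i ∈ Finset.range n, R := Finset.sum_le_sum fun i _ => (hr _ _).2
        _ = R * n := by simp [mul_comm]
      
  have hbound : IsBoundedUnder (· ≤ ·) atTop f := Filter.isBoundedUnder_of ⟨R, hfub⟩
  have hgbound : IsBoundedUnder (· ≥ ·) atTop g := hg_tendsto.isBoundedUnder_ge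
  have := Filter.liminf_le_liminf hle hgbound (hbound.isCoboundedUnder_ge)
  rwa [hg_tendsto.liminf_eq] at this
end

section
/- Let a : ℕ → ℝ be defined by block structure: in round i (for i = 1, 2, 3, …) the sequence takes value 10 for i consecutive steps, then 10 once, then 0 once. Then liminf_{n→∞} (1/n)·Σ_{j<n} a(j) = 10, and the value 0 is taken infinitely often. -/
open Filter Finset Classical

/-- The reward sequence of the infinite-memory optimal strategy of Fig. 5:
    round `i` (for `i = 1, 2, …`) consists of `i + 1` steps of reward `10`
    followed by one step of reward `0`; thus round `i` ends at position
    `∑_{j≤i} (j+2) − 1`, i.e. the zeros sit exactly at positions `n` with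
    `2(n+1) = i(i+3)` for some `i ≥ 1`. -/
noncomputable def roundSeq (n : ℕ) : ℝ :=
  if ∃ i : ℕ, 1 ≤ i ∧ 2 * (n + 1) = i * (i + 3) then 0 else 10

lemma roundSeq_cases (n : ℕ) : roundSeq n = 0 ∨ roundSeq n = 10 := by
  unfold roundSeq; split <;> simp

lemma roundSeq_exists {n : ℕ} (h : roundSeq n = 0) :
    ∃ i : ℕ, 1 ≤ i ∧ 2 * (n + 1) = i * (i + 3) := by
  by_contra hc
  rw [roundSeq, if_neg hc] at h
  norm_num at h

lemma zeroCard_le (N : ℕ) :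
    ((Finset.range N).filter (fun n => roundSeq n = 0)).card ≤ Nat.sqrt (2 * N) + 1 := by
  classical
  have h := Finset.card_le_card_of_injOn
    (s := (Finset.range N).filter (fun n => roundSeq n = 0))
    (t := Finset.range (Nat.sqrt (2 * N) + 1))
    (fun n => if h : ∃ i : ℕ, 1 ≤ i ∧ 2 * (n + 1) = i * (i + 3) then Classical.choose h else 0)
    ?_ ?_
  · simpa using h
  · intro n hn
    simp only [Finset.coe_filter, Set.mem_setOf_eq, Finset.mem_filter, Finset.mem_range] at hn
    obtain ⟨hnN, hz⟩ := hn
    have hex := roundSeq_exists hz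
    obtain ⟨h1, h2⟩ := Classical.choose_spec hex
    simp only [dif_pos hex, Finset.mem_coe, Finset.mem_range]
    have hsq : Classical.choose hex * Classical.choose hex ≤ 2 * N := by
      calc Classical.choose hex * Classical.choose hex
          ≤ Classical.choose hex * (Classical.choose hex + 3) := by nlinarith
        _ = 2 * (n + 1) := h2.symm
        _ ≤ 2 * N := by omega
    have := Nat.le_sqrt.2 hsq
    omega
  · intro a ha b hb hab
    simp only [Finset.coe_filter, Set.mem_setOf_eq, Finset.mem_range] at ha hb
    have hA := roundSeq_exists ha.2
    have hB := roundSeq_exists hb.2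
    simp only [dif_pos hA, dif_pos hB] at hab
    have h2A := (Classical.choose_spec hA).2
    have h2B := (Classical.choose_spec hB).2
    rw [hab] at h2A
    omega

lemma sum_lower (N : ℕ) :
    10 * (N : ℝ) - 10 * (((Finset.range N).filter (fun n => roundSeq n = 0)).card : ℝ)
      ≤ ∑ j ∈ Finset.range N, roundSeq j := by
  classical
  have key : ∑ j ∈ Finset.range N, roundSeq j
      = ∑ j ∈ Finset.range N, ((10 : ℝ) - if roundSeq j = 0 then 10 else 0) := by
    apply Finset.sum_congr rfl
    intro j _
    rcases roundSeq_cases j with h | h <;> simp [h]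
  rw [key, Finset.sum_sub_distrib, Finset.sum_const, ← Finset.sum_filter]
  simp [nsmul_eq_mul, mul_comm]

lemma sum_upper (N : ℕ) : ∑ j ∈ Finset.range N, roundSeq j ≤ 10 * (N : ℝ) := by
  calc ∑ j ∈ Finset.range N, roundSeq j ≤ ∑ _j ∈ Finset.range N, (10 : ℝ) := by
        apply Finset.sum_le_sum
        intro j _
        rcases roundSeq_cases j with h | h <;> simp [h]
    _ = 10 * N := by simp [mul_comm]

lemma invsqrt_tendsto : Tendsto (fun n : ℕ => 1 / Real.sqrt n) atTop (nhds 0) := by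
  have h1 : Tendsto (fun x : ℝ => x ^ (-(1/2) : ℝ)) atTop (nhds 0) :=
    tendsto_rpow_neg_atTop (by norm_num)
  have h2 : Tendsto (fun n : ℕ => ((n : ℝ)) ^ (-(1/2) : ℝ)) atTop (nhds 0) :=
    h1.comp tendsto_natCast_atTop_atTop
  apply h2.congr'
  filter_upwards [eventually_ge_atTop 1] with n hn
  have hn0 : (0 : ℝ) ≤ (n : ℝ) := Nat.cast_nonneg n
  rw [Real.sqrt_eq_rpow, Real.rpow_neg hn0]
  exact (one_div _).symm

lemma aux_tendsto :
    Tendsto (fun n : ℕ => ((Nat.sqrt (2 * n) : ℝ) + 1) / n) atTop (nhds 0) := by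
  apply squeeze_zero' (g := fun n : ℕ => Real.sqrt 2 * (1 / Real.sqrt n) + 1 / n)
  · filter_upwards with n
    positivity
  · filter_upwards [eventually_ge_atTop 1] with n hn
    have hn0 : (0 : ℝ) < (n : ℝ) := by exact_mod_cast hn
    have hcast : ((Nat.sqrt (2 * n) : ℝ)) ≤ Real.sqrt ((2 * n : ℕ) : ℝ) :=
      Real.nat_sqrt_le_real_sqrt
    have hsq : Real.sqrt ((2 * n : ℕ) : ℝ) = Real.sqrt 2 * Real.sqrt n := by
      push_cast
      rw [Real.sqrt_mul (by norm_num)]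
    have hss : Real.sqrt n * Real.sqrt n = (n : ℝ) :=
      Real.mul_self_sqrt hn0.le
    have hs0 : (0 : ℝ) < Real.sqrt n := Real.sqrt_pos.2 hn0
    rw [div_le_iff₀ hn0]
    have h1 : ((Nat.sqrt (2 * n) : ℝ)) + 1 ≤ Real.sqrt 2 * Real.sqrt n + 1 := by
      rw [← hsq]; linarith
    have h2 : (Real.sqrt 2 * (1 / Real.sqrt n) + 1 / n) * n
        = Real.sqrt 2 * Real.sqrt n + 1 := by
      field_simp
      linear_combination (-(Real.sqrt 2)) * hss
    linarith
  · have := (Real.sqrt_nonneg 2)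
    have h := (invsqrt_tendsto.const_mul (Real.sqrt 2)).add
      tendsto_one_div_atTop_nhds_zero_nat
    simpa using h

/-- The infinite-memory strategy achieves mean payoff `10` while taking the
    value `0` infinitely often. -/
theorem infinite_memory_optimal :
    Filter.liminf (fun n : ℕ => (∑ j ∈ Finset.range n, roundSeq j) / n) atTop
      = 10 ∧
    (∀ N : ℕ, ∃ n, N ≤ n ∧ roundSeq n = 0) := by
  constructor
  · have key : Tendsto (fun n : ℕ => (∑ j ∈ Finset.range n, roundSeq j) / n) atTop
        (nhds 10) := by
      apply tendsto_of_tendsto_of_tendsto_of_le_of_le'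
        (g := fun n : ℕ => 10 - 10 * (((Nat.sqrt (2 * n) : ℝ) + 1) / n))
        (h := fun _ : ℕ => (10 : ℝ))
      · have := (aux_tendsto.const_mul (10 : ℝ)).const_sub 10
        simpa using this
      · exact tendsto_const_nhds
      · filter_upwards [eventually_ge_atTop 1] with n hn
        have hn0 : (0 : ℝ) < (n : ℝ) := by exact_mod_cast hn
        have hcard : (((Finset.range n).filter (fun k => roundSeq k = 0)).card : ℝ)
            ≤ (Nat.sqrt (2 * n) : ℝ) + 1 := by
          exact_mod_cast zeroCard_le n
        have hlow := sum_lower n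
        rw [le_div_iff₀ hn0]
        have hexp : (10 - 10 * (((Nat.sqrt (2 * n) : ℝ) + 1) / n)) * n
            = 10 * (n : ℝ) - 10 * (((Nat.sqrt (2 * n) : ℝ)) + 1) := by
          field_simp
        rw [hexp]
        linarith
      · filter_upwards [eventually_ge_atTop 1] with n hn
        have hn0 : (0 : ℝ) < (n : ℝ) := by exact_mod_cast hn
        rw [div_le_iff₀ hn0]
        have := sum_upper n
        linarith
    exact key.liminf_eq
  · intro N
    refine ⟨(N + 1) * (2 * N + 5) - 1, ?_, ?_⟩
    · have : N + 1 ≤ (N + 1) * (2 * N + 5) := Nat.le_mul_of_pos_right _ (by omega)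
      omega
    · rw [roundSeq, if_pos]
      exact ⟨2 * (N + 1), by omega, by
        have : (N + 1) * (2 * N + 5) - 1 + 1 = (N + 1) * (2 * N + 5) := by
          have : 1 ≤ (N + 1) * (2 * N + 5) := by nlinarith
          omega
        rw [this]; ring⟩
end
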